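/- Let x > 0. If the initial guess y_0 satisfies 0 < y_0 < √3/√x, then all Newton iterates y_{n+1} = y_n(3/2 - x y_n²/2) remain positive and the sequence converges to 1/√x. -/

import Mathlib

theorem newton_invsqrt_basin_of_attraction (x : ℝ) (hx : 0 < x) (y : ℕ → ℝ)
    (h0 : 0 < y 0) (h0' : y 0 < Real.sqrt 3 / Real.sqrt x)
    (hrec : ∀ n, y (n + 1) = y n * (3 / 2 - x * (y n) ^ 2 / 2)) :
    (∀ n, 0 < y n) ∧
      Filter.Tendsto y Filter.atTop (nhds (1 / Real.sqrt x)) := by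
  set s := Real.sqrt x with hs_def
  have hs : 0 < s := Real.sqrt_pos.mpr hx
  have hsx : s ^ 2 = x := Real.sq_sqrt hx.le
  set z : ℕ → ℝ := fun n => s * y n with hz_def
  have hzrec : ∀ n, z (n + 1) = z n * (3 - z n ^ 2) / 2 := by
    intro n
    simp only [hz_def]
    rw [hrec n, ← hsx]
    ring
  have hz0 : 0 < z 0 := mul_pos hs h0
  have h3 : (Real.sqrt 3) ^ 2 = 3 := Real.sq_sqrt (by norm_num)
  have hz0sq : z 0 ^ 2 < 3 := by
    have h1 : y 0 * s < Real.sqrt 3 := (lt_div_iff₀ hs).mp h0'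
    have h2 : z 0 < Real.sqrt 3 := by
      show s * y 0 < Real.sqrt 3; linarith [mul_comm s (y 0) ▸ h1]
    have h4 := mul_self_lt_mul_self hz0.le h2
    nlinarith
  set c := z 1 with hc_def
  have hc : 0 < c := by rw [hc_def, hzrec 0]; nlinarith
  have hc1 : c ≤ 1 := by
    rw [hc_def, hzrec 0]
    nlinarith [sq_nonneg (z 0 - 1), mul_nonneg (sq_nonneg (z 0 - 1)) hz0.le]
  have hbound : ∀ n, c ≤ z (n + 1) ∧ z (n + 1) ≤ 1 := by
    intro n
    induction n with
    | zero => exact ⟨le_refl _, hc1⟩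
    | succ k ih =>
      obtain ⟨hl, hu⟩ := ih
      rw [hzrec (k + 1)]
      have hp : 0 < z (k + 1) := lt_of_lt_of_le hc hl
      constructor
      · nlinarith
      · nlinarith [sq_nonneg (z (k + 1) - 1), mul_nonneg (sq_nonneg (z (k + 1) - 1)) hp.le]
  have herr : ∀ n, 1 - z (n + 1) ≤ (1 - c / 2) ^ n * (1 - c) := by
    intro n
    induction n with
    | zero => simp [hc_def]
    | succ k ih =>
      obtain ⟨hl, hu⟩ := hbound k
      have step : 1 - z (k + 2) ≤ (1 - c / 2) * (1 - z (k + 1)) := by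
        rw [hzrec (k + 1)]; nlinarith
      have hr0 : 0 ≤ 1 - c / 2 := by linarith
      calc 1 - z (k + 2) ≤ (1 - c / 2) * (1 - z (k + 1)) := step
        _ ≤ (1 - c / 2) * ((1 - c / 2) ^ k * (1 - c)) :=
            mul_le_mul_of_nonneg_left ih hr0
        _ = (1 - c / 2) ^ (k + 1) * (1 - c) := by ring
  have hpos : ∀ n, 0 < y n := by
    intro n
    cases n with
    | zero => exact h0
    | succ k =>
      have := (hbound k).1
      have hzpos : 0 < z (k + 1) := lt_of_lt_of_le hc this
      have h5 : 0 < s * y (k + 1) := hzpos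
      rcases mul_pos_iff.mp h5 with ⟨_, h⟩ | ⟨h, _⟩
      · exact h
      · linarith
  refine ⟨hpos, ?_⟩
  have hr0 : (0:ℝ) ≤ 1 - c / 2 := by linarith
  have hr1 : 1 - c / 2 < 1 := by linarith
  have hgeo : Filter.Tendsto (fun n => (1 - c / 2) ^ n * (1 - c)) Filter.atTop (nhds 0) := by
    have := tendsto_pow_atTop_nhds_zero_of_lt_one hr0 hr1
    simpa using this.mul_const (1 - c)
  have hlow : Filter.Tendsto (fun n => 1 - (1 - c / 2) ^ n * (1 - c)) Filter.atTop (nhds 1) := by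
    have := hgeo.const_sub 1
    simpa using this
  have hz1 : Filter.Tendsto (fun n => z (n + 1)) Filter.atTop (nhds 1) := by
    refine tendsto_of_tendsto_of_tendsto_of_le_of_le hlow tendsto_const_nhds ?_ ?_
    · intro n; have := herr n; simp only; linarith
    · intro n; exact (hbound n).2
  have hz : Filter.Tendsto z Filter.atTop (nhds 1) :=
    (Filter.tendsto_add_atTop_iff_nat 1).mp hz1
  have hy : y = fun n => z n / s := by
    funext n
    rw [hz_def]
    field_simp
  rw [hy]
  simpa using hz.div_const s
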